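/- Let σ be the logistic sigmoid and fix η ∈ (0, 1/2) and ε ∈ (0,1). For every p ∈ (1/2, 1), |p - σ(σ^{-1}(p)/(1-η))| < |p - σ(σ^{-1}(p)/((1-ε)(1-2η)))|. That is, the pointwise calibration error of the DReg estimator (logit scaling 1/(1-η)) is strictly smaller than that of the label-smoothing baseline (logit scaling 1/((1-ε)(1-2η))). -/

import Mathlib

open Real

noncomputable def sigmoid (t : ℝ) : ℝ := 1 / (1 + Real.exp (-t))

noncomputable def logit (p : ℝ) : ℝ := Real.log (p / (1 - p))

lemma sigmoid_strictMono : StrictMono _root_.sigmoid := by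
  intro s t hst
  unfold _root_.sigmoid
  have h1 : Real.exp (-t) < Real.exp (-s) := Real.exp_lt_exp.mpr (by linarith)
  have h2 : (0:ℝ) < 1 + Real.exp (-t) := by positivity
  have h3 : (0:ℝ) < 1 + Real.exp (-s) := by positivity
  rw [div_lt_div_iff₀ h3 h2]
  linarith

lemma sigmoid_logit {p : ℝ} (h0 : 0 < p) (h1 : p < 1) : _root_.sigmoid (logit p) = p := by
  unfold _root_.sigmoid logit
  rw [Real.exp_neg, Real.exp_log (div_pos h0 (by linarith))]
  field_simp
  ring

/-- The pointwise calibration error of the DReg estimator (logit scaling `1/(1-η)`) is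
strictly smaller than that of the label-smoothing baseline
(logit scaling `1/((1-ε)(1-2η))`). -/
theorem dreg_pointwise_calibration_error_lt_baseline
    (η ε : ℝ) (hη : η ∈ Set.Ioo (0 : ℝ) (1/2)) (hε : ε ∈ Set.Ioo (0 : ℝ) 1)
    (p : ℝ) (hp : p ∈ Set.Ioo (1/2 : ℝ) 1) :
    |p - _root_.sigmoid (logit p / (1 - η))| <
      |p - _root_.sigmoid (logit p / ((1 - ε) * (1 - 2 * η)))| := by
  obtain ⟨hη0, hη2⟩ := hη
  obtain ⟨hε0, hε1⟩ := hε
  obtain ⟨hp2, hp1⟩ := hp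
  have hp0 : 0 < p := by linarith
  set t := logit p with ht
  have htpos : 0 < t := by
    have : (1:ℝ) < p / (1 - p) := by
      rw [lt_div_iff₀ (by linarith)]; linarith
    exact Real.log_pos this
  have hb : (0:ℝ) < (1 - ε) * (1 - 2 * η) := by nlinarith
  have ha : (0:ℝ) < 1 - η := by linarith
  have hab : (1 - ε) * (1 - 2 * η) < 1 - η := by nlinarith
  have ha1 : 1 - η < 1 := by linarith
  have h1 : t < t / (1 - η) := by
    rw [lt_div_iff₀ ha]; nlinarith
  have h2 : t / (1 - η) < t / ((1 - ε) * (1 - 2 * η)) :=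
    div_lt_div_of_pos_left htpos hb hab
  have s1 : p < _root_.sigmoid (t / (1 - η)) := by
    calc p = _root_.sigmoid t := (sigmoid_logit hp0 hp1).symm
    _ < _root_.sigmoid (t / (1 - η)) := sigmoid_strictMono h1
  have s2 : _root_.sigmoid (t / (1 - η)) < _root_.sigmoid (t / ((1 - ε) * (1 - 2 * η))) :=
    sigmoid_strictMono h2
  rw [abs_sub_comm p, abs_sub_comm p, abs_of_pos (by linarith), abs_of_pos (by linarith)]
  linarith
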